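/- arXiv:0808.2578 — 4 statements merged into one kernel-verified Lean document; each statement's English description precedes it below -/
import Mathlib

section
/- If A is a square complex matrix and there exists an invertible matrix Q such that the operator norm of Q⁻¹AQ is strictly less than 1, then for every complex matrix Δ with operator norm at most 1 that commutes with Q, the matrix I - ΔA is invertible. -/
open Matrix
open scoped Matrix.Norms.L2Operator

/-- Q-stability implies robust stability: if `‖Q⁻¹ A Q‖ < 1` for some invertible `Q`,
then `I - Δ A` is invertible for every contraction `Δ` commuting with `Q`. -/
theorem qStable_implies_robustStable {n : ℕ} (A Q : Matrix (Fin n) (Fin n) ℂ)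
    (hQ : IsUnit Q) (hnorm : ‖Q⁻¹ * A * Q‖ < 1) :
    ∀ Δ : Matrix (Fin n) (Fin n) ℂ, ‖Δ‖ ≤ 1 → Δ * Q = Q * Δ →
      IsUnit (1 - Δ * A) := by
  intro Δ hΔ hcomm
  have hdet : IsUnit Q.det := (Matrix.isUnit_iff_isUnit_det Q).mp hQ
  have hQQ : Q * Q⁻¹ = 1 := Matrix.mul_nonsing_inv Q hdet
  have hQQ' : Q⁻¹ * Q = 1 := Matrix.nonsing_inv_mul Q hdet
  have hcomm' : Q⁻¹ * Δ = Δ * Q⁻¹ := by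
    calc Q⁻¹ * Δ = Q⁻¹ * Δ * (Q * Q⁻¹) := by rw [hQQ, mul_one]
    _ = Q⁻¹ * (Δ * Q) * Q⁻¹ := by noncomm_ring
    _ = Q⁻¹ * (Q * Δ) * Q⁻¹ := by rw [hcomm]
    _ = (Q⁻¹ * Q) * Δ * Q⁻¹ := by noncomm_ring
    _ = Δ * Q⁻¹ := by rw [hQQ', one_mul]
  have key : ‖Q⁻¹ * (Δ * A) * Q‖ < 1 := by
    have : Q⁻¹ * (Δ * A) * Q = Δ * (Q⁻¹ * A * Q) := by
      calc Q⁻¹ * (Δ * A) * Q = (Q⁻¹ * Δ) * (A * Q) := by noncomm_ring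
      _ = Δ * Q⁻¹ * (A * Q) := by rw [hcomm']
      _ = Δ * (Q⁻¹ * A * Q) := by noncomm_ring
    rw [this]
    calc ‖Δ * (Q⁻¹ * A * Q)‖ ≤ ‖Δ‖ * ‖Q⁻¹ * A * Q‖ := norm_mul_le _ _
    _ ≤ 1 * ‖Q⁻¹ * A * Q‖ := by
        apply mul_le_mul_of_nonneg_right hΔ (norm_nonneg _)
    _ < 1 := by rw [one_mul]; exact hnorm
  have hunit : IsUnit (1 - Q⁻¹ * (Δ * A) * Q) := by
    have : ‖-(Q⁻¹ * (Δ * A) * Q)‖ < 1 := by rwa [norm_neg]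
    simpa using (Units.oneSub _ key).isUnit
  have heq : 1 - Δ * A = Q * (1 - Q⁻¹ * (Δ * A) * Q) * Q⁻¹ := by
    rw [mul_sub, sub_mul, mul_one, hQQ]
    congr 1
    calc Δ * A = (Q * Q⁻¹) * (Δ * A) * (Q * Q⁻¹) := by rw [hQQ]; noncomm_ring
    _ = Q * (Q⁻¹ * (Δ * A) * Q) * Q⁻¹ := by noncomm_ring
  rw [heq]
  exact (hQ.mul hunit).mul ((Matrix.isUnit_nonsing_inv_iff).mpr hQ)
end

section
/- If X is a positive definite Hermitian matrix satisfying A X A* - X < 0, then the spectral radius of A is strictly less than 1. -/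
open Matrix
open scoped ComplexOrder

/-- If `X > 0` and `A X A* - X < 0`, then every eigenvalue of `A` has modulus
strictly less than 1 (the spectral radius of `A` is `< 1`). -/
theorem spectralRadius_lt_one_of_LMI {n : ℕ} (A X : Matrix (Fin n) (Fin n) ℂ)
    (hX : X.PosDef) (hLMI : (X - A * X * Aᴴ).PosDef) :
    ∀ μ ∈ spectrum ℂ A, ‖μ‖ < 1 := by
  intro μ hμ
  -- from μ ∈ spectrum A, det (μ•1 - A) = 0
  rw [spectrum.mem_iff] at hμ
  have hdet : (algebraMap ℂ (Matrix (Fin n) (Fin n) ℂ) μ - A).det = 0 := by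
    by_contra h
    exact hμ ((Matrix.isUnit_iff_isUnit_det _).mpr (isUnit_iff_ne_zero.mpr h))
  -- transfer to the conjugate transpose
  have hdetH : ((algebraMap ℂ (Matrix (Fin n) (Fin n) ℂ) μ - A)ᴴ).det = 0 := by
    rw [Matrix.det_conjTranspose, hdet, star_zero]
  obtain ⟨v, hv, hvA⟩ := (Matrix.exists_mulVec_eq_zero_iff).mpr hdetH
  have hAv : Aᴴ *ᵥ v = star μ • v := by
    have := hvA
    rw [Matrix.conjTranspose_sub, Matrix.sub_mulVec, sub_eq_zero] at this
    have h1 : (algebraMap ℂ (Matrix (Fin n) (Fin n) ℂ) μ)ᴴ *ᵥ v = star μ • v := by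
      rw [Algebra.algebraMap_eq_smul_one]
      simp [Matrix.conjTranspose_smul, Matrix.smul_mulVec]
    rw [← this, h1]
  -- test the LMI against v
  have hpos := hLMI.dotProduct_mulVec_pos hv
  have hXv := hX.dotProduct_mulVec_pos hv
  set c : ℂ := star v ⬝ᵥ X *ᵥ v with hc
  have key : star v ⬝ᵥ (A * X * Aᴴ) *ᵥ v = (star μ * μ) * c := by
    have h1 : (A * X * Aᴴ) *ᵥ v = A *ᵥ (X *ᵥ (Aᴴ *ᵥ v)) := by
      simp [Matrix.mulVec_mulVec, Matrix.mul_assoc]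
    have h2 : star v ⬝ᵥ A *ᵥ (X *ᵥ (Aᴴ *ᵥ v)) = star (Aᴴ *ᵥ v) ⬝ᵥ (X *ᵥ (Aᴴ *ᵥ v)) := by
      rw [Matrix.star_mulVec, Matrix.conjTranspose_conjTranspose, Matrix.dotProduct_mulVec]
    rw [h1, h2, hAv]
    simp [Matrix.mulVec_smul, dotProduct_smul, smul_dotProduct, hc]
    ring
  have hsub : star v ⬝ᵥ (X - A * X * Aᴴ) *ᵥ v = c - (star μ * μ) * c := by
    rw [Matrix.sub_mulVec, dotProduct_sub, key]
  rw [hsub] at hpos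
  -- pass to real parts
  have hcre : 0 < c.re := by
    rw [Complex.pos_iff] at hXv
    exact hXv.1
  have hmm : star μ * μ = (‖μ‖ ^ 2 : ℝ) := by
    rw [Complex.star_def, mul_comm, Complex.mul_conj, Complex.normSq_eq_norm_sq]
  rw [Complex.pos_iff] at hpos
  have hre : 0 < (c - (star μ * μ) * c).re := by simpa using hpos.1
  rw [hmm] at hre
  have : 0 < (1 - ‖μ‖ ^ 2) * c.re := by
    have : (c - ((‖μ‖ ^ 2 : ℝ) : ℂ) * c).re = (1 - ‖μ‖ ^ 2) * c.re := by
      rw [Complex.sub_re, Complex.re_ofReal_mul]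
      ring
    rwa [this] at hre
  have h2 : ‖μ‖ ^ 2 < 1 := by
    nlinarith
  nlinarith [norm_nonneg μ]
end

section
/- Let M = [[A, B],[C, D]] be a block operator matrix with ‖M‖ < 1. Then ‖A‖ < 1, and moreover for every Δ with ‖Δ‖ ≤ 1, the matrix I - ΔA is invertible and ‖D + C(I - ΔA)⁻¹ΔB‖ < 1. -/
open Matrix
open scoped Matrix.Norms.L2Operator

private lemma euclid_sum_sq {X U : Type*} [Fintype X] [Fintype U]
    (a : X → ℂ) (b : U → ℂ) :
    ‖(EuclideanSpace.equiv (X ⊕ U) ℂ).symm (Sum.elim a b)‖ ^ 2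
      = ‖(EuclideanSpace.equiv X ℂ).symm a‖ ^ 2 + ‖(EuclideanSpace.equiv U ℂ).symm b‖ ^ 2 := by
  simp only [EuclideanSpace.norm_eq]
  rw [Real.sq_sqrt (by positivity), Real.sq_sqrt (by positivity), Real.sq_sqrt (by positivity)]
  simp [Fintype.sum_sum_type]

private lemma l2_opNorm_le_of {m n : Type*} [Fintype m] [Fintype n] [DecidableEq n]
    (A : Matrix m n ℂ) {c : ℝ} (hc : 0 ≤ c)
    (h : ∀ x : EuclideanSpace ℂ n, ‖(EuclideanSpace.equiv m ℂ).symm (A *ᵥ x)‖ ≤ c * ‖x‖) :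
    ‖A‖ ≤ c := by
  rw [Matrix.l2_opNorm_def]
  exact ContinuousLinearMap.opNorm_le_bound _ hc h

private lemma mulVec_norm_le' {m n : Type*} [Fintype m] [Fintype n] [DecidableEq n]
    (A : Matrix m n ℂ) (x : n → ℂ) :
    ‖(EuclideanSpace.equiv m ℂ).symm (A *ᵥ x)‖ ≤ ‖A‖ * ‖(EuclideanSpace.equiv n ℂ).symm x‖ :=
  A.l2_opNorm_mulVec ((EuclideanSpace.equiv n ℂ).symm x)

/-- Contractivity version of the Main Loop theorem: if the block matrix
`M = [[A, B], [C, D]]` is a strict contraction, then `‖A‖ < 1`, and for every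
contraction `Δ` the matrix `I - ΔA` is invertible and the upper linear fractional
transformation `F_u(M, Δ) = D + C (I - ΔA)⁻¹ Δ B` is a strict contraction. -/
theorem mainLoop_contractive {X U Y : Type*} [Fintype X] [Fintype U] [Fintype Y]
    [DecidableEq X] [DecidableEq U] [DecidableEq Y]
    (A : Matrix X X ℂ) (B : Matrix X U ℂ) (C : Matrix Y X ℂ) (D : Matrix Y U ℂ)
    (hM : ‖Matrix.fromBlocks A B C D‖ < 1) :
    ‖A‖ < 1 ∧ ∀ Δ : Matrix X X ℂ, ‖Δ‖ ≤ 1 →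
      IsUnit (1 - Δ * A) ∧ ‖D + C * (1 - Δ * A)⁻¹ * Δ * B‖ < 1 := by
  set M : Matrix (X ⊕ Y) (X ⊕ U) ℂ := Matrix.fromBlocks A B C D with hMdef
  have hM0 : (0:ℝ) ≤ ‖M‖ := norm_nonneg _
  -- key quadratic inequality
  have key : ∀ (x : X → ℂ) (u : U → ℂ),
      ‖(EuclideanSpace.equiv X ℂ).symm (A *ᵥ x + B *ᵥ u)‖ ^ 2
        + ‖(EuclideanSpace.equiv Y ℂ).symm (C *ᵥ x + D *ᵥ u)‖ ^ 2
      ≤ ‖M‖ ^ 2 * (‖(EuclideanSpace.equiv X ℂ).symm x‖ ^ 2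
        + ‖(EuclideanSpace.equiv U ℂ).symm u‖ ^ 2) := by
    intro x u
    have h1 := mulVec_norm_le' M (Sum.elim x u)
    have h2 : M *ᵥ (Sum.elim x u) = Sum.elim (A *ᵥ x + B *ᵥ u) (C *ᵥ x + D *ᵥ u) := by
      rw [hMdef, Matrix.fromBlocks_mulVec]
      simp [Sum.elim_comp_inl, Sum.elim_comp_inr]
    rw [h2] at h1
    have h3 := pow_le_pow_left₀ (norm_nonneg _) h1 2
    rw [mul_pow] at h3
    rw [euclid_sum_sq, euclid_sum_sq] at h3
    exact h3
  -- step 1 : ‖A‖ ≤ ‖M‖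
  have hA : ‖A‖ ≤ ‖M‖ := by
    apply l2_opNorm_le_of A hM0
    intro x
    have h := key ((EuclideanSpace.equiv X ℂ) x) 0
    simp only [Matrix.mulVec_zero, add_zero, map_zero, norm_zero] at h
    rw [ContinuousLinearEquiv.symm_apply_apply] at h
    have h' : ‖(EuclideanSpace.equiv X ℂ).symm (A *ᵥ ((EuclideanSpace.equiv X ℂ) x))‖ ^ 2
        ≤ (‖M‖ * ‖x‖) ^ 2 := by rw [mul_pow]; nlinarith [sq_nonneg (‖(EuclideanSpace.equiv Y ℂ).symm (C *ᵥ ((EuclideanSpace.equiv X ℂ) x))‖)]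
    have := (pow_le_pow_iff_left₀ (norm_nonneg _) (by positivity) two_ne_zero).mp h'
    exact this
  have hA1 : ‖A‖ < 1 := lt_of_le_of_lt hA hM
  refine ⟨hA1, ?_⟩
  intro Δ hΔ
  haveI : CompleteSpace (Matrix X X ℂ) := FiniteDimensional.complete ℂ _
  have hΔA : ‖Δ * A‖ < 1 := by
    calc ‖Δ * A‖ ≤ ‖Δ‖ * ‖A‖ := Matrix.l2_opNorm_mul Δ A
    _ ≤ 1 * ‖A‖ := by apply mul_le_mul_of_nonneg_right hΔ (norm_nonneg _)
    _ = ‖A‖ := one_mul _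
    _ < 1 := hA1
  have hUnit : IsUnit (1 - Δ * A) := ⟨Units.oneSub (Δ * A) hΔA, rfl⟩
  refine ⟨hUnit, ?_⟩
  have hinv : (1 - Δ * A) * (1 - Δ * A)⁻¹ = 1 :=
    Matrix.mul_nonsing_inv _ ((Matrix.isUnit_iff_isUnit_det _).mp hUnit)
  set F : Matrix Y U ℂ := D + C * (1 - Δ * A)⁻¹ * Δ * B with hFdef
  have main : ∀ u : U → ℂ,
      ‖(EuclideanSpace.equiv Y ℂ).symm (F *ᵥ u)‖ ≤ ‖M‖ * ‖(EuclideanSpace.equiv U ℂ).symm u‖ := by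
    intro u
    set q : X → ℂ := ((1 - Δ * A)⁻¹ * (Δ * B)) *ᵥ u with hqdef
    have hq1 : (1 - Δ * A) *ᵥ q = (Δ * B) *ᵥ u := by
      rw [hqdef, Matrix.mulVec_mulVec, ← Matrix.mul_assoc, hinv, Matrix.one_mul]
    have hq2 : q = Δ *ᵥ (A *ᵥ q + B *ᵥ u) := by
      rw [Matrix.mulVec_add, Matrix.mulVec_mulVec q Δ A, Matrix.mulVec_mulVec u Δ B]
      have h := hq1
      rw [Matrix.sub_mulVec, Matrix.one_mulVec] at h
      exact eq_add_of_sub_eq' h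
    have hFu : F *ᵥ u = C *ᵥ q + D *ᵥ u := by
      have hassoc : C * (1 - Δ * A)⁻¹ * Δ * B = C * ((1 - Δ * A)⁻¹ * (Δ * B)) := by
        rw [Matrix.mul_assoc (C * (1 - Δ * A)⁻¹) Δ B, Matrix.mul_assoc C (1 - Δ * A)⁻¹ (Δ * B)]
      rw [hFdef, Matrix.add_mulVec, hassoc, ← Matrix.mulVec_mulVec, add_comm]
    have h1 := key q u
    have h2 : ‖(EuclideanSpace.equiv X ℂ).symm q‖
        ≤ ‖(EuclideanSpace.equiv X ℂ).symm (A *ᵥ q + B *ᵥ u)‖ := by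
      calc ‖(EuclideanSpace.equiv X ℂ).symm q‖
          = ‖(EuclideanSpace.equiv X ℂ).symm (Δ *ᵥ (A *ᵥ q + B *ᵥ u))‖ := by rw [← hq2]
        _ ≤ ‖Δ‖ * ‖(EuclideanSpace.equiv X ℂ).symm (A *ᵥ q + B *ᵥ u)‖ := mulVec_norm_le' _ _
        _ ≤ 1 * ‖(EuclideanSpace.equiv X ℂ).symm (A *ᵥ q + B *ᵥ u)‖ :=
            mul_le_mul_of_nonneg_right hΔ (norm_nonneg _)
        _ = _ := one_mul _
    rw [hFu]
    have hM2 : ‖M‖ ^ 2 ≤ 1 := by nlinarith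
    have hq2' : ‖(EuclideanSpace.equiv X ℂ).symm q‖ ^ 2
        ≤ ‖(EuclideanSpace.equiv X ℂ).symm (A *ᵥ q + B *ᵥ u)‖ ^ 2 :=
      pow_le_pow_left₀ (norm_nonneg _) h2 2
    have hqM : ‖M‖ ^ 2 * ‖(EuclideanSpace.equiv X ℂ).symm q‖ ^ 2
        ≤ ‖(EuclideanSpace.equiv X ℂ).symm q‖ ^ 2 :=
      mul_le_of_le_one_left (sq_nonneg _) hM2
    have h3 : ‖(EuclideanSpace.equiv Y ℂ).symm (C *ᵥ q + D *ᵥ u)‖ ^ 2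
        ≤ (‖M‖ * ‖(EuclideanSpace.equiv U ℂ).symm u‖) ^ 2 := by
      rw [mul_pow]
      nlinarith [h1, hq2', hqM]
    exact (pow_le_pow_iff_left₀ (norm_nonneg _) (by positivity) two_ne_zero).mp h3
  have hF : ‖F‖ ≤ ‖M‖ := by
    apply l2_opNorm_le_of F hM0
    intro x
    have := main ((EuclideanSpace.equiv U ℂ) x)
    rw [ContinuousLinearEquiv.symm_apply_apply] at this
    exact this
  exact lt_of_le_of_lt hF hM
end

section
/- Let X and Y be positive definite Hermitian matrices satisfying the strict homogeneous matrix inequalities B⊥* (A Y A* - Y) B⊥ < 0 and C⊥ (A* X A - X) C⊥* < 0. Then for all sufficiently large μ > 0, the matrices X̃ = μX and Ỹ = μY still satisfy the same two inequalities and additionally satisfy [[X̃, I],[I, Ỹ]] ≥ 0. -/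
open Matrix
open scoped ComplexOrder

section Helpers

variable {m : Type*} [Fintype m] [DecidableEq m]

lemma smul_posDef' {M : Matrix m m ℂ} (hM : M.PosDef) {μ : ℝ} (hμ : 0 < μ) :
    ((μ : ℂ) • M).PosDef := by
  refine .of_dotProduct_mulVec_pos ?_ fun x hx => ?_
  · unfold Matrix.IsHermitian
    rw [conjTranspose_smul, hM.1.eq]
    simp
  · rw [smul_mulVec, dotProduct_smul, smul_eq_mul]
    exact mul_pos (by exact_mod_cast hμ) (hM.dotProduct_mulVec_pos hx)

lemma smul_posSemidef' {M : Matrix m m ℂ} (hM : M.PosSemidef) {μ : ℝ} (hμ : 0 ≤ μ) :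
    ((μ : ℂ) • M).PosSemidef := by
  refine .of_dotProduct_mulVec_nonneg ?_ fun x => ?_
  · unfold Matrix.IsHermitian
    rw [conjTranspose_smul, hM.1.eq]
    simp
  · rw [smul_mulVec, dotProduct_smul, smul_eq_mul]
    exact mul_nonneg (by exact_mod_cast hμ) (hM.dotProduct_mulVec_nonneg x)

lemma exists_smul_one_sub_posSemidef' {S : Matrix m m ℂ} (hS : S.IsHermitian) :
    ∃ c : ℝ, 0 < c ∧ ((c : ℂ) • 1 - S).PosSemidef := by
  obtain ⟨M, hM⟩ := Finite.exists_le hS.eigenvalues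
  refine ⟨max M 1, lt_of_lt_of_le one_pos (le_max_right _ _), ?_⟩
  set c : ℝ := max M 1 with hc
  set U : Matrix m m ℂ := (hS.eigenvectorUnitary : Matrix m m ℂ) with hUdef
  have hU : U * star U = 1 := Unitary.mul_star_self_of_mem hS.eigenvectorUnitary.2
  have hD : (c : ℂ) • (1 : Matrix m m ℂ) - diagonal (RCLike.ofReal ∘ hS.eigenvalues) =
      diagonal fun i => ((c - hS.eigenvalues i : ℝ) : ℂ) := by
    ext i j
    by_cases h : i = j <;>
      simp [diagonal_apply, Matrix.one_apply, h, Function.comp, Complex.ofReal_sub]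
  have key : (c : ℂ) • (1 : Matrix m m ℂ) - S =
      U * (diagonal fun i => ((c - hS.eigenvalues i : ℝ) : ℂ)) * Uᴴ := by
    rw [← Matrix.star_eq_conjTranspose, ← hD, Matrix.mul_sub, Matrix.sub_mul,
      Matrix.mul_smul, Matrix.mul_one, Matrix.smul_mul, hU]
    conv_lhs => rw [hS.spectral_theorem]
    rw [Unitary.conjStarAlgAut_apply]
  rw [key]
  refine PosSemidef.mul_mul_conjTranspose_same (PosSemidef.diagonal ?_) U
  intro i
  simp only [Pi.zero_apply]
  have : hS.eigenvalues i ≤ c := le_trans (hM i) (le_max_left _ _)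
  exact_mod_cast sub_nonneg.mpr this

open scoped MatrixOrder in
lemma exists_smul_sub_posSemidef' {Q H : Matrix m m ℂ} (hQ : Q.PosDef) (hH : H.IsHermitian) :
    ∃ c : ℝ, 0 < c ∧ ((c : ℂ) • Q - H).PosSemidef := by
  set R := CFC.sqrt Q with hRdef
  have hRpsd : R.PosSemidef := (CFC.sqrt_nonneg Q).posSemidef
  have hRH : R.IsHermitian := hRpsd.1
  have hRR : R * R = Q := CFC.sqrt_mul_sqrt_self Q hQ.posSemidef.nonneg
  have hdet : IsUnit R.det := by
    have h1 : R.det * R.det = Q.det := by rw [← det_mul, hRR]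
    have hQd : Q.det ≠ 0 := ne_of_gt hQ.det_pos
    refine isUnit_iff_ne_zero.mpr fun h0 => hQd ?_
    rw [← h1, h0, mul_zero]
  have hRinvH : R⁻¹.IsHermitian := hRH.inv
  have hS : (R⁻¹ * H * R⁻¹).IsHermitian := by
    unfold Matrix.IsHermitian
    rw [conjTranspose_mul, conjTranspose_mul, hRinvH.eq, hH.eq, Matrix.mul_assoc]
  obtain ⟨c, hc, hpsd⟩ := exists_smul_one_sub_posSemidef' hS
  refine ⟨c, hc, ?_⟩
  have hRHR : R * (R⁻¹ * H * R⁻¹) * R = H := by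
    simp only [Matrix.mul_assoc]
    rw [Matrix.nonsing_inv_mul _ hdet, Matrix.mul_one, ← Matrix.mul_assoc,
      Matrix.mul_nonsing_inv _ hdet, Matrix.one_mul]
  have key : (c : ℂ) • Q - H = R * ((c : ℂ) • 1 - R⁻¹ * H * R⁻¹) * Rᴴ := by
    rw [hRH.eq, Matrix.mul_sub, Matrix.sub_mul, Matrix.mul_smul, Matrix.mul_one,
      Matrix.smul_mul, hRR, hRHR]
  rw [key]
  exact hpsd.mul_mul_conjTranspose_same R

end Helpers

/-- The coupling condition can be dropped when no rank constraints are imposed: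
if `X, Y > 0` satisfy the homogeneous LMIs `B⊥* (A Y A* - Y) B⊥ < 0` and
`C⊥ (A* X A - X) C⊥* < 0`, then for all sufficiently large `μ > 0` the rescalings
`μ X, μ Y` satisfy the same LMIs together with `[[μX, I],[I, μY]] ≥ 0`. -/
theorem coupling_by_rescaling {n p q : ℕ} (A X Y : Matrix (Fin n) (Fin n) ℂ)
    (Bperp : Matrix (Fin n) (Fin p) ℂ) (Cperp : Matrix (Fin q) (Fin n) ℂ)
    (hB : Function.Injective Bperp.mulVec) (hC : Function.Injective Cperpᴴ.mulVec)
    (hX : X.PosDef) (hY : Y.PosDef)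
    (hLMI_Y : (-(Bperpᴴ * (A * Y * Aᴴ - Y) * Bperp)).PosDef)
    (hLMI_X : (-(Cperp * (Aᴴ * X * A - X) * Cperpᴴ)).PosDef) :
    ∃ μ₀ : ℝ, 0 < μ₀ ∧ ∀ μ : ℝ, μ₀ ≤ μ →
      (-(Bperpᴴ * (A * ((μ : ℂ) • Y) * Aᴴ - (μ : ℂ) • Y) * Bperp)).PosDef ∧
      (-(Cperp * (Aᴴ * ((μ : ℂ) • X) * A - (μ : ℂ) • X) * Cperpᴴ)).PosDef ∧
      (Matrix.fromBlocks ((μ : ℂ) • X) 1 1 ((μ : ℂ) • Y)).PosSemidef := by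
  obtain ⟨c, hc, hcQ⟩ := exists_smul_sub_posSemidef' hY hX.1.inv
  refine ⟨max c 1, lt_of_lt_of_le one_pos (le_max_right _ _), fun μ hμ => ?_⟩
  have hμ1 : (1 : ℝ) ≤ μ := le_trans (le_max_right _ _) hμ
  have hμc : c ≤ μ := le_trans (le_max_left _ _) hμ
  have hμpos : 0 < μ := lt_of_lt_of_le one_pos hμ1
  refine ⟨?_, ?_, ?_⟩
  · have e1 : -(Bperpᴴ * (A * ((μ : ℂ) • Y) * Aᴴ - (μ : ℂ) • Y) * Bperp) =
        (μ : ℂ) • -(Bperpᴴ * (A * Y * Aᴴ - Y) * Bperp) := by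
      simp only [Matrix.mul_smul, Matrix.smul_mul, smul_sub, smul_neg,
        Matrix.mul_sub, Matrix.sub_mul]
    rw [e1]
    exact smul_posDef' hLMI_Y hμpos
  · have e2 : -(Cperp * (Aᴴ * ((μ : ℂ) • X) * A - (μ : ℂ) • X) * Cperpᴴ) =
        (μ : ℂ) • -(Cperp * (Aᴴ * X * A - X) * Cperpᴴ) := by
      simp only [Matrix.mul_smul, Matrix.smul_mul, smul_sub, smul_neg,
        Matrix.mul_sub, Matrix.sub_mul]
    rw [e2]
    exact smul_posDef' hLMI_X hμpos
  · have hμX : ((μ : ℂ) • X).PosDef := smul_posDef' hX hμpos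
    have hμXdet : IsUnit ((μ : ℂ) • X).det := isUnit_iff_ne_zero.mpr (ne_of_gt hμX.det_pos)
    haveI : Invertible ((μ : ℂ) • X) := Matrix.invertibleOfIsUnitDet _ hμXdet
    have hXdet : IsUnit X.det := isUnit_iff_ne_zero.mpr (ne_of_gt hX.det_pos)
    haveI : Invertible (μ : ℂ) :=
      invertibleOfNonzero (by exact_mod_cast ne_of_gt hμpos)
    have hinv : ((μ : ℂ) • X)⁻¹ = ((μ⁻¹ : ℝ) : ℂ) • X⁻¹ := by
      rw [Matrix.inv_smul X (μ : ℂ) hXdet]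
      congr 1
      exact invOf_eq_right_inv (by
        push_cast
        field_simp)
    have hSchur : ((μ : ℂ) • Y -
        (1 : Matrix (Fin n) (Fin n) ℂ)ᴴ * ((μ : ℂ) • X)⁻¹ * 1).PosSemidef := by
      rw [conjTranspose_one, Matrix.one_mul, Matrix.mul_one, hinv]
      have heq : (μ : ℂ) • Y - ((μ⁻¹ : ℝ) : ℂ) • X⁻¹ =
          ((μ - μ⁻¹ * c : ℝ) : ℂ) • Y + ((μ⁻¹ : ℝ) : ℂ) • ((c : ℂ) • Y - X⁻¹) := by
        push_cast
        module
      rw [heq]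
      have h1 : (0 : ℝ) ≤ μ - μ⁻¹ * c := by
        have h2 : μ⁻¹ * c ≤ 1 * c :=
          mul_le_mul_of_nonneg_right (inv_le_one_of_one_le₀ hμ1) (le_of_lt hc)
        rw [one_mul] at h2
        linarith
      exact (smul_posSemidef' hY.posSemidef h1).add
        (smul_posSemidef' hcQ (inv_nonneg.mpr hμpos.le))
    have hfin := (PosDef.fromBlocks₁₁ (1 : Matrix (Fin n) (Fin n) ℂ)
      ((μ : ℂ) • Y) hμX).mpr hSchur
    simpa using hfin
end
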